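/- Let r ≥ 1 and k ≥ 1 be integers and let A_{ij} (i, j ∈ [1,k]) be r × r matrices over a field F with |F| ≥ k such that each diagonal matrix A_{ii} is invertible. Then there exist r × r matrices M₁,…,M_k over F such that for every j ∈ [1,k], the matrix M₁A_{1j} + M₂A_{2j} + ⋯ + M_kA_{kj} is invertible. -/

import Mathlib

open Matrix

section Avoid

variable {F V : Type*} [Field F] [AddCommGroup V] [Module F V]

/-- If `|F| ≥ k`, a finite-dimensional `F`-vector space is not the union of `k`
proper subspaces. -/
lemma exists_notMem_of_card [FiniteDimensional F V] {k : ℕ}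
    (hF : (k : Cardinal) ≤ Cardinal.mk F) (U : Fin k → Submodule F V)
    (hU : ∀ j, U j ≠ ⊤) : ∃ v : V, ∀ j, v ∉ U j := by
  by_contra hc
  push_neg at hc
  rcases isEmpty_or_nonempty (Fin k) with hk | hk
  · obtain ⟨j, -⟩ := hc 0
    exact hk.elim j
  have j₀ : Fin k := Classical.arbitrary _
  obtain ⟨v₀, hv₀⟩ : ∃ v, v ∉ U j₀ := by
    by_contra h
    push_neg at h
    exact hU j₀ (eq_top_iff.mpr fun x _ => h x)
  have hVnt : Nontrivial V := ⟨v₀, 0, fun h => hv₀ (h ▸ (U j₀).zero_mem)⟩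
  cases finite_or_infinite F with
  | inr hinf =>
      have hcover : ⋃ j, ((U j) : Set V) = Set.univ := by
        ext v
        simp only [Set.mem_iUnion, Set.mem_univ, iff_true, SetLike.mem_coe]
        exact hc v
      obtain ⟨j, hj⟩ := Subspace.exists_eq_top_of_iUnion_eq_univ hcover
      exact hU j hj
  | inl hfin =>
      classical
      have : Fintype F := Fintype.ofFinite F
      have hVfin : Finite V := Module.finite_of_finite F
      have : Fintype V := Fintype.ofFinite V
      set q := Fintype.card F with hqdef
      have hq2 : 2 ≤ q := Fintype.one_lt_card
      have hkq : k ≤ q := by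
        rw [Cardinal.mk_fintype] at hF
        exact_mod_cast hF
      set N := Fintype.card V with hNdef
      have hN2 : 2 ≤ N := Fintype.one_lt_card
      set c : Fin k → ℕ := fun j => Nat.card (U j) with hcdef
      have hc1 : ∀ j, 1 ≤ c j := fun j =>
        Nat.card_pos (α := U j)
      have key : ∀ j, q * c j ≤ N := by
        intro j
        have h1 : Nat.card V = Nat.card (U j) * Nat.card (V ⧸ U j) :=
          Submodule.card_eq_card_quotient_mul_card (U j)
        have h2 : q ≤ Nat.card (V ⧸ U j) := by
          have hnt : Nontrivial (V ⧸ U j) :=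
            Submodule.Quotient.nontrivial_iff.mpr (hU j)
          obtain ⟨x, hx⟩ := exists_ne (0 : V ⧸ U j)
          have hinj : Function.Injective (fun t : F => t • x) := by
            intro a b hab
            by_contra hne
            apply hx
            have hab' : a • x = b • x := hab
            have h3 : (a - b) • x = 0 := by
              rw [sub_smul, hab', sub_self]
            have := smul_eq_zero.mp h3
            rcases this with h | h
            · exact absurd (sub_eq_zero.mp h) hne
            · exact absurd h hx
          calc q = Nat.card F := Nat.card_eq_fintype_card.symm
            _ ≤ Nat.card (V ⧸ U j) := Nat.card_le_card_of_injective _ hinj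
        calc q * c j ≤ Nat.card (V ⧸ U j) * Nat.card (U j) :=
              Nat.mul_le_mul_right _ h2
          _ = Nat.card V := by rw [mul_comm]; exact h1.symm
          _ = N := Nat.card_eq_fintype_card
      -- counting
      have hsub : Finset.univ.erase (0 : V) ⊆
          Finset.univ.biUnion (fun j => ((U j : Set V).toFinset.erase 0)) := by
        intro v hv
        obtain ⟨hv0, -⟩ := Finset.mem_erase.mp hv
        obtain ⟨j, hj⟩ := hc v
        refine Finset.mem_biUnion.mpr ⟨j, Finset.mem_univ _, ?_⟩
        exact Finset.mem_erase.mpr ⟨hv0, Set.mem_toFinset.mpr hj⟩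
      have h3 : (Finset.univ.erase (0 : V)).card = N - 1 := by
        rw [Finset.card_erase_of_mem (Finset.mem_univ _), Finset.card_univ]
      have h4 : (Finset.univ.biUnion
            (fun j => ((U j : Set V).toFinset.erase 0))).card ≤
          ∑ j : Fin k, (c j - 1) := by
        refine Finset.card_biUnion_le.trans (Finset.sum_le_sum fun j _ => ?_)
        rw [Finset.card_erase_of_mem (Set.mem_toFinset.mpr (U j).zero_mem)]
        have : (U j : Set V).toFinset.card = c j := by
          rw [Set.toFinset_card, hcdef]
          simp [Nat.card_eq_fintype_card]
        omega
      have h5 : N - 1 ≤ ∑ j : Fin k, (c j - 1) :=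
        h3 ▸ (Finset.card_le_card hsub).trans h4
      -- arithmetic contradiction
      have h6 : ∀ j, q * (c j - 1) ≤ N - q := by
        intro j
        have e : q * (c j - 1) + q = q * c j := by
          conv_rhs => rw [← Nat.sub_add_cancel (hc1 j)]
          rw [Nat.mul_add, Nat.mul_one]
        have := key j
        omega
      have hqN : q ≤ N := le_trans (by nlinarith [hc1 j₀]) (key j₀)
      have h7 : q * (N - 1) ≤ q * (N - q) := by
        calc q * (N - 1) ≤ q * ∑ j : Fin k, (c j - 1) :=
              Nat.mul_le_mul_left _ h5
          _ = ∑ j : Fin k, q * (c j - 1) := Finset.mul_sum _ _ _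
          _ ≤ ∑ j : Fin k, (N - q) := Finset.sum_le_sum fun j _ => h6 j
          _ = k * (N - q) := by
              rw [Finset.sum_const, Finset.card_univ, Fintype.card_fin, smul_eq_mul]
          _ ≤ q * (N - q) := Nat.mul_le_mul_right _ hkq
      have h8 : N - 1 ≤ N - q := Nat.le_of_mul_le_mul_left h7 (by omega)
      omega

/-- Greedy construction of a subspace of prescribed dimension meeting each of
`k` given subspaces of dimension at most `r` trivially. -/
lemma exists_avoiding [FiniteDimensional F V] {k r : ℕ} (hk : 1 ≤ k)
    (hF : (k : Cardinal) ≤ Cardinal.mk F) (Vj : Fin k → Submodule F V)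
    (hVj : ∀ j, Module.finrank F (Vj j) ≤ r) :
    ∀ m, m + r ≤ Module.finrank F V →
      ∃ W : Submodule F V, Module.finrank F W = m ∧ ∀ j, W ⊓ Vj j = ⊥ := by
  intro m
  induction m with
  | zero =>
      intro _
      exact ⟨⊥, finrank_bot F V, fun j => bot_inf_eq _⟩
  | succ m ih =>
      intro hm
      obtain ⟨W, hWrank, hWV⟩ := ih (by omega)
      have hproper : ∀ j, Vj j ⊔ W ≠ ⊤ := by
        intro j htop
        have h1 : Module.finrank F ↥(Vj j ⊔ W) ≤ r + m := by
          have := Submodule.finrank_sup_add_finrank_inf_eq (Vj j) W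
          have h2 := hVj j
          omega
        rw [htop, finrank_top] at h1
        omega
      obtain ⟨v, hv⟩ := exists_notMem_of_card hF (fun j => Vj j ⊔ W) hproper
      have hvW : v ∉ W := fun h => hv ⟨0, hk⟩ (Submodule.mem_sup_right h)
      have hv0 : v ≠ 0 := fun h => hvW (h ▸ W.zero_mem)
      refine ⟨W ⊔ F ∙ v, ?_, ?_⟩
      · have hinf : W ⊓ (F ∙ v) = ⊥ := by
          rw [eq_bot_iff]
          rintro x ⟨hxW, hxs⟩
          obtain ⟨t, rfl⟩ := Submodule.mem_span_singleton.mp hxs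
          rcases eq_or_ne t 0 with rfl | ht
          · simp
          · exact absurd (by
              have : v = t⁻¹ • (t • v) := by rw [smul_smul, inv_mul_cancel₀ ht, one_smul]
              rw [this]
              exact W.smul_mem _ hxW) hvW
        have := Submodule.finrank_sup_add_finrank_inf_eq W (F ∙ v)
        rw [hinf, hWrank, finrank_span_singleton hv0, finrank_bot] at this
        omega
      · intro j
        rw [eq_bot_iff]
        rintro x ⟨hxW', hxV⟩
        obtain ⟨w, hw, y, hy, rfl⟩ := Submodule.mem_sup.mp hxW'
        obtain ⟨t, rfl⟩ := Submodule.mem_span_singleton.mp hy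
        rcases eq_or_ne t 0 with rfl | ht
        · rw [zero_smul, add_zero] at hxV ⊢
          have : w ∈ W ⊓ Vj j := ⟨hw, hxV⟩
          rw [hWV j] at this
          exact this
        · exfalso
          apply hv j
          have hmem : t • v ∈ Vj j ⊔ W := by
            have h1 : w + t • v ∈ Vj j ⊔ W := Submodule.mem_sup_left hxV
            have h2 : w ∈ Vj j ⊔ W := Submodule.mem_sup_right hw
            have h3 := (Vj j ⊔ W).sub_mem h1 h2
            simpa using h3
          have hveq : v = t⁻¹ • (t • v) := by
            rw [smul_smul, inv_mul_cancel₀ ht, one_smul]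
          rw [hveq]
          exact (Vj j ⊔ W).smul_mem _ hmem

end Avoid

set_option maxHeartbeats 1000000 in
set_option synthInstance.maxHeartbeats 400000 in
theorem stmt19 (r k : ℕ) (hr : 1 ≤ r) (hk : 1 ≤ k)
    {F : Type*} [Field F] (hF : (k : Cardinal) ≤ Cardinal.mk F)
    (A : Fin k → Fin k → Matrix (Fin r) (Fin r) F)
    (hA : ∀ i, IsUnit (A i i)) :
    ∃ M : Fin k → Matrix (Fin r) (Fin r) F,
      ∀ j, IsUnit (∑ i, M i * A i j) := by
  classical
  set V := (Fin k → Fin r → F) with hVdef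
  let Φ : Fin k → ((Fin r → F) →ₗ[F] V) :=
    fun j => LinearMap.pi (fun i => Matrix.mulVecLin (A i j))
  have hΦapp : ∀ j x i, Φ j x i = A i j *ᵥ x := fun j x i => rfl
  have hΦinj : ∀ j, Function.Injective (Φ j) := by
    intro j
    rw [← LinearMap.ker_eq_bot, LinearMap.ker_eq_bot']
    intro x hx
    have hxj : A j j *ᵥ x = 0 := by
      have := congrFun (congrArg (fun (v : V) => v) hx) j
      exact (hΦapp j x j).symm.trans (congrFun hx j)
    obtain ⟨inst⟩ := (hA j).nonempty_invertible
    calc x = (⅟(A j j) * A j j) *ᵥ x := by rw [invOf_mul_self, Matrix.one_mulVec]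
      _ = ⅟(A j j) *ᵥ (A j j *ᵥ x) := (Matrix.mulVec_mulVec _ _ _).symm
      _ = 0 := by rw [hxj, Matrix.mulVec_zero]
  let Vj : Fin k → Submodule F V := fun j => LinearMap.range (Φ j)
  have hVjrank : ∀ j, Module.finrank F (Vj j) ≤ r := by
    intro j
    have h1 := LinearMap.finrank_range_le (Φ j)
    rwa [Module.finrank_fintype_fun_eq_card, Fintype.card_fin] at h1
  have hn : Module.finrank F V = k * r := by
    rw [Module.finrank_pi_fintype]
    simp [Module.finrank_fintype_fun_eq_card, Finset.sum_const, mul_comm]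
  have hkr : (k - 1) * r + r = k * r := by
    cases k with
    | zero => omega
    | succ n => simp [Nat.succ_sub_one, Nat.succ_mul]
  obtain ⟨W, hWrank, hWVj⟩ := exists_avoiding hk hF Vj hVjrank ((k - 1) * r)
    (by rw [hn]; omega)
  obtain ⟨Wc, hWc⟩ := Submodule.exists_isCompl W
  have hWcrank : Module.finrank F Wc = r := by
    have h1 := Submodule.finrank_add_eq_of_isCompl hWc
    rw [hWrank, hn] at h1
    omega
  let e : Wc ≃ₗ[F] (Fin r → F) := LinearEquiv.ofFinrankEq _ _
    (by rw [hWcrank, Module.finrank_fintype_fun_eq_card, Fintype.card_fin])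
  let P : V →ₗ[F] Wc := Wc.linearProjOfIsCompl W hWc.symm
  let L : V →ₗ[F] (Fin r → F) := e.toLinearMap ∘ₗ P
  refine ⟨fun i => LinearMap.toMatrix'
      (L ∘ₗ LinearMap.single F (fun _ : Fin k => Fin r → F) i), fun j => ?_⟩
  have hsum : ∑ i, LinearMap.toMatrix'
        (L ∘ₗ LinearMap.single F (fun _ : Fin k => Fin r → F) i) * A i j
      = LinearMap.toMatrix' (L ∘ₗ Φ j) := by
    have step : ∀ i : Fin k, LinearMap.toMatrix'
          (L ∘ₗ LinearMap.single F (fun _ : Fin k => Fin r → F) i) * A i j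
        = LinearMap.toMatrix'
          ((L ∘ₗ LinearMap.single F (fun _ : Fin k => Fin r → F) i) ∘ₗ
            Matrix.toLin' (A i j)) := by
      intro i
      rw [LinearMap.toMatrix'_comp, LinearMap.toMatrix'_toLin']
    rw [Finset.sum_congr rfl (fun i _ => step i), ← map_sum]
    congr 1
    refine LinearMap.ext fun x => ?_
    rw [LinearMap.sum_apply]
    calc ∑ i, ((L ∘ₗ LinearMap.single F (fun _ : Fin k => Fin r → F) i) ∘ₗ
            Matrix.toLin' (A i j)) x
        = ∑ i, L (Pi.single i (A i j *ᵥ x)) := by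
          refine Finset.sum_congr rfl fun i _ => ?_
          rw [LinearMap.comp_apply, LinearMap.comp_apply, Matrix.toLin'_apply]
          rfl
      _ = L (∑ i, Pi.single i (A i j *ᵥ x)) := (map_sum L _ _).symm
      _ = (L ∘ₗ Φ j) x := by
          rw [LinearMap.comp_apply]
          exact congrArg L (Finset.univ_sum_single (Φ j x))
  rw [hsum, Matrix.isUnit_iff_isUnit_det, LinearMap.det_toMatrix']
  have hinj : Function.Injective (L ∘ₗ Φ j) := by
    rw [← LinearMap.ker_eq_bot, LinearMap.ker_eq_bot']
    intro x hx
    have h1 : Φ j x ∈ W := by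
      have hP : P (Φ j x) = 0 := by
        have h0 : e (P (Φ j x)) = e 0 := by rw [map_zero]; exact hx
        exact e.injective h0
      have hker := Submodule.linearProjOfIsCompl_ker hWc.symm
      have : Φ j x ∈ LinearMap.ker (Wc.projectionOnto W hWc.symm) :=
        LinearMap.mem_ker.mpr hP
      rwa [hker] at this
    have h2 : Φ j x ∈ Vj j := ⟨x, rfl⟩
    have h3 : Φ j x ∈ W ⊓ Vj j := ⟨h1, h2⟩
    rw [hWVj j] at h3
    have h4 : Φ j x = 0 := h3
    exact hΦinj j (by rw [h4, map_zero])
  have hsurj := (LinearMap.injective_iff_surjective).mp hinj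
  have := (LinearEquiv.ofBijective (L ∘ₗ Φ j) ⟨hinj, hsurj⟩).isUnit_det'
  have hcoe : ((LinearEquiv.ofBijective (L ∘ₗ Φ j) ⟨hinj, hsurj⟩ : (Fin r → F) →ₗ[F] (Fin r → F)) = L ∘ₗ Φ j) :=
    LinearMap.ext fun _ => rfl
  rw [hcoe] at this
  simpa using this
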